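/- arXiv:2411.01217 — 3 statements merged into one kernel-verified Lean document; each statement's English description precedes it below -/
import Mathlib

section
/- In a two-player zero-sum finite game, if each player's average external regret after T rounds is at most ε, i.e., max_a (1/T) Σ_{t=1}^T (u^i(a, σ_t^{-i}) - u^i(σ_t)) ≤ ε for i = 1,2, then the profile of average strategies (σ̄_T^1, σ̄_T^2) is a 2ε-Nash equilibrium. -/
open Finset

/-- Bilinear expected payoff of player 1 in a two-player game with pure payoff
matrix `u`, given mixed strategies `σ1, σ2`. -/
noncomputable def biPayoff {A1 A2 : Type*} [Fintype A1] [Fintype A2]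
    (u : A1 → A2 → ℝ) (σ1 : A1 → ℝ) (σ2 : A2 → ℝ) : ℝ :=
  ∑ a : A1, ∑ b : A2, σ1 a * σ2 b * u a b

/-- In a two-player zero-sum finite game (player 2's payoff is `-u`), if each
player's average external regret after `T` rounds is at most `ε`, then the profile
of average strategies is a `2ε`-Nash equilibrium: each player's exploitability at
the average profile is at most `2ε`. -/
theorem avg_regret_le_implies_2eps_nash
    {A1 A2 : Type*} [Fintype A1] [Fintype A2] [Nonempty A1] [Nonempty A2]
    (u : A1 → A2 → ℝ) (ε : ℝ) (T : ℕ) (hT : 1 ≤ T)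
    (σ1 : ℕ → A1 → ℝ) (σ2 : ℕ → A2 → ℝ)
    (hσ1 : ∀ t, (∀ a, 0 ≤ σ1 t a) ∧ ∑ a, σ1 t a = 1)
    (hσ2 : ∀ t, (∀ b, 0 ≤ σ2 t b) ∧ ∑ b, σ2 t b = 1)
    (hreg1 : ∀ a : A1,
      (1 / (T : ℝ)) * ∑ t ∈ Finset.Icc 1 T,
        ((∑ b, σ2 t b * u a b) - biPayoff u (σ1 t) (σ2 t)) ≤ ε)
    (hreg2 : ∀ b : A2,
      (1 / (T : ℝ)) * ∑ t ∈ Finset.Icc 1 T,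
        ((∑ a, σ1 t a * (-u a b)) - biPayoff (fun a b => -u a b) (σ1 t) (σ2 t)) ≤ ε) :
    let σ1bar : A1 → ℝ := fun a => (1 / (T : ℝ)) * ∑ t ∈ Finset.Icc 1 T, σ1 t a
    let σ2bar : A2 → ℝ := fun b => (1 / (T : ℝ)) * ∑ t ∈ Finset.Icc 1 T, σ2 t b
    (∀ a : A1, (∑ b, σ2bar b * u a b) - biPayoff u σ1bar σ2bar ≤ 2 * ε) ∧
    (∀ b : A2, (∑ a, σ1bar a * (-u a b)) - biPayoff (fun a b => -u a b) σ1bar σ2bar ≤ 2 * ε) := by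
  intro σ1bar σ2bar
  have hT0 : (0:ℝ) < T := by exact_mod_cast hT
  have hTne : (T:ℝ) ≠ 0 := ne_of_gt hT0
  have hcard : ((Finset.Icc 1 T).card : ℝ) = (T : ℝ) := by
    simp [Nat.card_Icc]
  set V : ℝ := (1 / (T:ℝ)) * ∑ t ∈ Finset.Icc 1 T, biPayoff u (σ1 t) (σ2 t) with hVdef
  -- distribution facts for the averages
  have hσ1bar_nonneg : ∀ a, 0 ≤ σ1bar a := by
    intro a
    apply mul_nonneg (by positivity)
    exact Finset.sum_nonneg fun t _ => (hσ1 t).1 a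
  have hσ2bar_nonneg : ∀ b, 0 ≤ σ2bar b := by
    intro b
    apply mul_nonneg (by positivity)
    exact Finset.sum_nonneg fun t _ => (hσ2 t).1 b
  have hσ1bar_sum : ∑ a, σ1bar a = 1 := by
    simp only [σ1bar, ← Finset.mul_sum]
    rw [Finset.sum_comm]
    simp only [fun t => (hσ1 t).2]
    rw [Finset.sum_const, nsmul_eq_mul, mul_one]
    field_simp
    exact hcard
  have hσ2bar_sum : ∑ b, σ2bar b = 1 := by
    simp only [σ2bar, ← Finset.mul_sum]
    rw [Finset.sum_comm]
    simp only [fun t => (hσ2 t).2]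
    rw [Finset.sum_const, nsmul_eq_mul, mul_one]
    field_simp
    exact hcard
  -- linearity: averaged row/column payoffs
  have heq1 : ∀ a : A1, ∑ b, σ2bar b * u a b
      = (1/(T:ℝ)) * ∑ t ∈ Finset.Icc 1 T, ∑ b, σ2 t b * u a b := by
    intro a
    simp only [σ2bar, Finset.mul_sum, Finset.sum_mul]
    rw [Finset.sum_comm]
    exact Finset.sum_congr rfl fun t _ => Finset.sum_congr rfl fun b _ => by ring
  have heq2 : ∀ b : A2, ∑ a, σ1bar a * u a b
      = (1/(T:ℝ)) * ∑ t ∈ Finset.Icc 1 T, ∑ a, σ1 t a * u a b := by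
    intro b
    simp only [σ1bar, Finset.mul_sum, Finset.sum_mul]
    rw [Finset.sum_comm]
    exact Finset.sum_congr rfl fun t _ => Finset.sum_congr rfl fun a _ => by ring
  -- regret bounds rewritten
  have h1 : ∀ a : A1, (∑ b, σ2bar b * u a b) - V ≤ ε := by
    intro a
    have h := hreg1 a
    rw [Finset.sum_sub_distrib, mul_sub] at h
    rw [heq1 a]
    exact h
  have h2 : ∀ b : A2, V - (∑ a, σ1bar a * u a b) ≤ ε := by
    intro b
    have h := hreg2 b
    have hneg : ∀ t, biPayoff (fun a b => -u a b) (σ1 t) (σ2 t)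
        = - biPayoff u (σ1 t) (σ2 t) := by
      intro t
      simp [biPayoff, mul_neg, Finset.sum_neg_distrib]
    have hrow : ∀ t, (∑ a, σ1 t a * (-u a b)) = - ∑ a, σ1 t a * u a b := by
      intro t
      simp [mul_neg]
    simp only [hneg, hrow, sub_neg_eq_add] at h
    have : (1 / (T:ℝ)) * ∑ t ∈ Finset.Icc 1 T,
        (-∑ a, σ1 t a * u a b + biPayoff u (σ1 t) (σ2 t))
        = V - (∑ a, σ1bar a * u a b) := by
      rw [heq2 b, hVdef]
      rw [Finset.sum_add_distrib, mul_add, Finset.sum_neg_distrib]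
      ring
    linarith [h, this.symm.le, this.le]
  -- bilinear expansions
  have hbi1 : biPayoff u σ1bar σ2bar = ∑ a, σ1bar a * ∑ b, σ2bar b * u a b := by
    simp [biPayoff, Finset.mul_sum, mul_assoc]
  have hbi2 : biPayoff u σ1bar σ2bar = ∑ b, σ2bar b * ∑ a, σ1bar a * u a b := by
    rw [biPayoff, Finset.sum_comm]
    apply Finset.sum_congr rfl
    intro b _
    rw [Finset.mul_sum]
    apply Finset.sum_congr rfl
    intro a _
    ring
  -- lower bound on the average payoff
  have hlow : V - ε ≤ biPayoff u σ1bar σ2bar := by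
    rw [hbi2]
    calc V - ε = ∑ b, σ2bar b * (V - ε) := by
          rw [← Finset.sum_mul, hσ2bar_sum, one_mul]
      _ ≤ ∑ b, σ2bar b * ∑ a, σ1bar a * u a b := by
          apply Finset.sum_le_sum
          intro b _
          apply mul_le_mul_of_nonneg_left _ (hσ2bar_nonneg b)
          linarith [h2 b]
  -- upper bound on the average payoff
  have hup : biPayoff u σ1bar σ2bar ≤ V + ε := by
    rw [hbi1]
    calc ∑ a, σ1bar a * ∑ b, σ2bar b * u a b
        ≤ ∑ a, σ1bar a * (V + ε) := by
          apply Finset.sum_le_sum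
          intro a _
          apply mul_le_mul_of_nonneg_left _ (hσ1bar_nonneg a)
          linarith [h1 a]
      _ = V + ε := by rw [← Finset.sum_mul, hσ1bar_sum, one_mul]
  constructor
  · intro a
    linarith [h1 a, hlow]
  · intro b
    have hnegbar : biPayoff (fun a b => -u a b) σ1bar σ2bar
        = - biPayoff u σ1bar σ2bar := by
      simp [biPayoff, mul_neg, Finset.sum_neg_distrib]
    have hrowbar : (∑ a, σ1bar a * (-u a b)) = - ∑ a, σ1bar a * u a b := by
      simp [mul_neg]
    rw [hnegbar, hrowbar]
    have := h2 b
    linarith [hup]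
end

section
/- (Regret matching step inequality) Suppose at each round t a learner with d actions plays σ_t = R̄_{t-1}^+/‖R̄_{t-1}^+‖₁ when R̄_{t-1}^+ ≠ 0 (arbitrary otherwise), receiving payoff vector ℓ_t ∈ [0, L]^d, with cumulative regret R_T = Σ_{t=1}^T (ℓ_t - ⟨ℓ_t, σ_t⟩·1). Then ‖R_T^+‖₂² ≤ ‖R_{T-1}^+‖₂² + ‖ℓ_T - ⟨ℓ_T, σ_T⟩·1‖₂², and hence ‖R_T^+‖₂ ≤ L√(d·T). -/
open Finset

/-- Regret matching step inequality: a learner with `d` actions plays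
`σ_t = R_{t−1}⁺/‖R_{t−1}⁺‖₁` whenever `R_{t−1}⁺ ≠ 0`, receives payoff vectors
`ℓ_t ∈ [0,L]^d`, and accumulates regret
`R_T = Σ_{t=1}^T (ℓ_t − ⟨ℓ_t, σ_t⟩·1)`.  Then
`‖R_T⁺‖₂² ≤ ‖R_{T−1}⁺‖₂² + ‖ℓ_T − ⟨ℓ_T, σ_T⟩·1‖₂²`, and hence
`‖R_T⁺‖₂ ≤ L·√(d·T)`. -/
theorem regret_matching_step (d : ℕ) (hd : 1 ≤ d) (L : ℝ) (hL : 0 ≤ L)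
    (ℓ σ : ℕ → Fin d → ℝ)
    (hℓ : ∀ t j, ℓ t j ∈ Set.Icc (0 : ℝ) L)
    (hσ : ∀ t, (∀ j, 0 ≤ σ t j) ∧ ∑ j, σ t j = 1)
    (R : ℕ → Fin d → ℝ)
    (hR : ∀ T j, R T j = ∑ t ∈ Finset.Icc 1 T, (ℓ t j - ∑ k, ℓ t k * σ t k))
    (hrm : ∀ t, 1 ≤ t → (fun j => max (R (t - 1) j) 0) ≠ 0 →
      σ t = fun j => max (R (t - 1) j) 0 / ∑ k, max (R (t - 1) k) 0) :
    ∀ T, 1 ≤ T →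
      (∑ j, (max (R T j) 0) ^ 2 ≤
        ∑ j, (max (R (T - 1) j) 0) ^ 2 + ∑ j, (ℓ T j - ∑ k, ℓ T k * σ T k) ^ 2) ∧
      Real.sqrt (∑ j, (max (R T j) 0) ^ 2) ≤ L * Real.sqrt (d * T) := by
  set c : ℕ → ℝ := fun t => ∑ k, ℓ t k * σ t k with hc
  have hc0 : ∀ t, 0 ≤ c t := fun t =>
    Finset.sum_nonneg fun k _ => mul_nonneg (hℓ t k).1 ((hσ t).1 k)
  have hcL : ∀ t, c t ≤ L := by
    intro t
    calc c t ≤ ∑ k, L * σ t k :=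
          Finset.sum_le_sum fun k _ => mul_le_mul_of_nonneg_right (hℓ t k).2 ((hσ t).1 k)
      _ = L := by rw [← Finset.mul_sum, (hσ t).2, mul_one]
  have hstep : ∀ T j, R (T + 1) j = R T j + (ℓ (T + 1) j - c (T + 1)) := by
    intro T j
    rw [hR, hR, Finset.sum_Icc_succ_top (by omega : 1 ≤ T + 1)]
  -- the forcing (inner product) property
  have hip : ∀ T, ∑ j, max (R T j) 0 * (ℓ (T + 1) j - c (T + 1)) ≤ 0 := by
    intro T
    by_cases h0 : (fun j => max (R T j) 0) = 0
    · have h0' : ∀ j, max (R T j) 0 = 0 := fun j => congrFun h0 j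
      simp [h0']
    · have hσ' := hrm (T + 1) (by omega) (by simpa using h0)
      simp only [Nat.add_sub_cancel] at hσ'
      set S := ∑ k, max (R T k) 0 with hS
      have hSpos : 0 < S := by
        obtain ⟨j, hj⟩ : ∃ j, max (R T j) 0 ≠ 0 := by
          by_contra h; push_neg at h; exact h0 (funext h)
        have hj' : 0 < max (R T j) 0 := lt_of_le_of_ne (le_max_right _ _) (Ne.symm hj)
        refine lt_of_lt_of_le hj' ?_
        rw [hS]
        exact Finset.single_le_sum (f := fun k => max (R T k) 0)
          (fun k _ => le_max_right _ _) (Finset.mem_univ j)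
      have hcval : c (T + 1) = (∑ k, ℓ (T + 1) k * max (R T k) 0) / S := by
        simp only [hc, hσ']
        rw [Finset.sum_div]
        exact Finset.sum_congr rfl fun k _ => by ring
      have heq : ∑ j, max (R T j) 0 * (ℓ (T + 1) j - c (T + 1))
          = (∑ j, ℓ (T + 1) j * max (R T j) 0) - c (T + 1) * S := by
        simp only [mul_sub]
        rw [Finset.sum_sub_distrib, ← Finset.sum_mul]
        congr 1
        · exact Finset.sum_congr rfl fun j _ => mul_comm _ _
        · ring
      rw [heq, hcval, div_mul_cancel₀ _ (ne_of_gt hSpos), sub_self]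
  -- pointwise square inequality
  have hsq : ∀ (x r : ℝ), (max (x + r) 0) ^ 2 ≤ (max x 0 + r) ^ 2 := by
    intro x r
    rcases le_or_gt (x + r) 0 with h | h
    · rw [max_eq_right h]; simpa using sq_nonneg (max x 0 + r)
    · rw [max_eq_left h.le]
      have h1 : x + r ≤ max x 0 + r := by
        have := le_max_left x 0; linarith
      exact pow_le_pow_left₀ h.le h1 2
  -- main step inequality
  have hmain : ∀ T, ∑ j, (max (R (T + 1) j) 0) ^ 2 ≤
      ∑ j, (max (R T j) 0) ^ 2 + ∑ j, (ℓ (T + 1) j - c (T + 1)) ^ 2 := by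
    intro T
    have h1 : ∑ j, (max (R (T + 1) j) 0) ^ 2 ≤
        ∑ j, (max (R T j) 0 + (ℓ (T + 1) j - c (T + 1))) ^ 2 :=
      Finset.sum_le_sum fun j _ => by rw [hstep T j]; exact hsq _ _
    have h2 : ∑ j, (max (R T j) 0 + (ℓ (T + 1) j - c (T + 1))) ^ 2
        = ∑ j, (max (R T j) 0) ^ 2
          + 2 * ∑ j, max (R T j) 0 * (ℓ (T + 1) j - c (T + 1))
          + ∑ j, (ℓ (T + 1) j - c (T + 1)) ^ 2 := by
      rw [Finset.mul_sum, ← Finset.sum_add_distrib, ← Finset.sum_add_distrib]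
      exact Finset.sum_congr rfl fun j _ => by ring
    have := hip T
    linarith
  -- each instantaneous term bounded by d L²
  have hterm : ∀ t, ∑ j, (ℓ t j - c t) ^ 2 ≤ d * L ^ 2 := by
    intro t
    calc ∑ j, (ℓ t j - c t) ^ 2 ≤ ∑ _j : Fin d, L ^ 2 :=
          Finset.sum_le_sum fun j _ => by
            have h1 := (hℓ t j).1; have h2 := (hℓ t j).2
            have h3 := hc0 t; have h4 := hcL t
            nlinarith
      _ = d * L ^ 2 := by simp [Finset.sum_const, nsmul_eq_mul]
  -- cumulative bound by induction
  have hbound : ∀ T, ∑ j, (max (R T j) 0) ^ 2 ≤ d * L ^ 2 * T := by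
    intro T
    induction T with
    | zero =>
      have : ∀ j, R 0 j = 0 := fun j => by rw [hR]; simp
      simp [this]
    | succ n ih =>
      have := hmain n
      have := hterm (n + 1)
      push_cast
      nlinarith
  intro T hT
  obtain ⟨n, rfl⟩ : ∃ n, T = n + 1 := ⟨T - 1, by omega⟩
  refine ⟨by simpa using hmain n, ?_⟩
  have h1 : ∑ j, (max (R (n + 1) j) 0) ^ 2 ≤ L ^ 2 * ((d : ℝ) * ((n : ℝ) + 1)) := by
    have := hbound (n + 1); push_cast at this ⊢; nlinarith
  rw [show ((n + 1 : ℕ) : ℝ) = (n : ℝ) + 1 by push_cast; ring]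
  calc Real.sqrt (∑ j, (max (R (n + 1) j) 0) ^ 2)
      ≤ Real.sqrt (L ^ 2 * ((d : ℝ) * ((n : ℝ) + 1))) := Real.sqrt_le_sqrt h1
    _ = L * Real.sqrt ((d : ℝ) * ((n : ℝ) + 1)) := by
        rw [Real.sqrt_mul (sq_nonneg L), Real.sqrt_sq hL]
end

section
/- In Kuhn poker, for every α ∈ [0, 1/3], the parametrized strategy for player 1 (bet with J with probability α at the first decision, bet with Q with probability 0, bet with K with probability 3α, and the corresponding prescribed responses after player 2 bets: fold with J, call with Q with probability α + 1/3, call with K always) achieves the same expected payoff against player 2's unique equilibrium strategy; in particular player 1's expected payoffs are equal for all α in this family. -/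
open Finset

noncomputable def kuhnEV (α : ℝ) : ℝ :=
  let b1 : Fin 3 → ℝ := ![α, 0, 3 * α]          -- P1 bet probability
  let c1 : Fin 3 → ℝ := ![0, α + 1 / 3, 1]      -- P1 call probability after pass–bet
  let c2 : Fin 3 → ℝ := ![0, 1 / 3, 1]          -- P2 call probability facing a bet
  let b2 : Fin 3 → ℝ := ![1 / 3, 0, 1]          -- P2 bet probability after a pass
  let win : Fin 3 → Fin 3 → ℝ := fun x y => if y < x then 1 else -1
  (1 / 6 : ℝ) * ∑ x : Fin 3, ∑ y : Fin 3,
    if x = y then 0 else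
      b1 x * (c2 y * (2 * win x y) + (1 - c2 y) * 1) +
      (1 - b1 x) *
        (b2 y * (c1 x * (2 * win x y) + (1 - c1 x) * (-1)) +
         (1 - b2 y) * win x y)

lemma kuhnEV_eq (α : ℝ) : kuhnEV α = -1/18 := by
  unfold kuhnEV
  simp only [Fin.sum_univ_three, Matrix.cons_val_zero, Matrix.cons_val_one, Matrix.head_cons,
    Matrix.cons_val_two, Matrix.tail_cons]
  norm_num [Fin.lt_def, Fin.ext_iff]
  ring

/-- In Kuhn poker, every member of player 1's `α`-parametrized family of
equilibrium strategies, `α ∈ [0, 1/3]`, achieves the same expected payoff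
against player 2's unique equilibrium strategy. -/
theorem kuhn_family_payoff_constant :
    ∀ α ∈ Set.Icc (0 : ℝ) (1 / 3), ∀ α' ∈ Set.Icc (0 : ℝ) (1 / 3),
      kuhnEV α = kuhnEV α' := by
  intro α _ α' _
  rw [kuhnEV_eq, kuhnEV_eq]
end
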